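/- Let $d \ge 1$, $h > 0$, and let $u, v : \mathbb{Z}^d \to \mathbb{R}$ be finitely supported, with hat interpolants $\Phi u, \Phi v$ defined by $\Phi u(x) = \sum_k u_k \prod_i \chi(x_i/h - k_i)$, $\chi(t) = \max(0,1-|t|)$. The interpolants are Lipschitz, hence almost everywhere differentiable, and $\Big| \sum_{i=1}^d \int_{\mathbb{R}^d} \partial_i(\Phi v)(x)\, \partial_i(\Phi u)(x)\, dx \Big| \;\le\; h^d \, q(v)^{1/2} q(u)^{1/2}$, where $q(u) = \sum_{i=1}^d \sum_{k \in \mathbb{Z}^d} \big( (u_{k+e_i} - u_k)/h \big)^2$ is the discrete Dirichlet energy. -/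

import Mathlib

open BigOperators MeasureTheory

/-- The canonical hat function on `ℝ`, centered at `0` with support `[-1,1]`. -/
noncomputable def chi (t : ℝ) : ℝ := max 0 (1 - |t|)

noncomputable def sfun (t : ℝ) : ℝ := if 0 < t ∧ t < 1 then 1 else 0

noncomputable def dchi (t : ℝ) : ℝ := sfun (t + 1) - sfun t

lemma chi_nonneg (t : ℝ) : 0 ≤ chi t := le_max_left _ _

lemma chi_le_one (t : ℝ) : chi t ≤ 1 := by
  unfold chi
  rcases abs_nonneg t with h
  apply max_le <;> linarith

lemma chi_eq_zero {t : ℝ} (ht : 1 ≤ |t|) : chi t = 0 := by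
  unfold chi; rw [max_eq_left]; linarith

lemma abs_chi_sub_chi_le (a b : ℝ) : |chi a - chi b| ≤ |a - b| := by
  unfold chi
  rw [max_comm 0 (1 - |a|), max_comm 0 (1 - |b|)]
  calc |max (1 - |a|) 0 - max (1 - |b|) 0| ≤ |(1 - |a|) - (1 - |b|)| :=
        abs_max_sub_max_le_abs _ _ _
    _ = |(|b| - |a|)| := by congr 1; ring
    _ ≤ |b - a| := abs_abs_sub_abs_le_abs_sub _ _
    _ = |a - b| := abs_sub_comm _ _

lemma sfun_nonneg (t : ℝ) : 0 ≤ sfun t := by unfold sfun; split <;> norm_num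

lemma sfun_le_one (t : ℝ) : sfun t ≤ 1 := by unfold sfun; split <;> norm_num

lemma continuous_chi : Continuous chi :=
  continuous_const.max (continuous_const.sub continuous_abs)

lemma hasDerivAt_chi {t : ℝ} (ht : ∀ n : ℤ, t ≠ (n : ℝ)) :
    HasDerivAt chi (dchi t) t := by
  have h0 : t ≠ 0 := by simpa using ht 0
  have h1 : t ≠ 1 := by simpa using ht 1
  have hm1 : t ≠ -1 := by simpa using ht (-1)
  rcases lt_trichotomy t 0 with hneg | hz | hpos
  · rcases lt_trichotomy t (-1) with hlt | he | hgt
    · -- t < -1 : chi locally 0, dchi t = 0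
      have hd : dchi t = 0 := by
        unfold dchi sfun
        rw [if_neg (by push_neg; intro h'; linarith), if_neg (by push_neg; intro h'; linarith)]
        ring
      rw [hd]
      have : chi =ᶠ[nhds t] fun _ => (0 : ℝ) := by
        filter_upwards [Iio_mem_nhds hlt] with s hs
        exact chi_eq_zero (by rw [abs_of_neg (by simpa using hs.trans (by norm_num))]; simp at hs ⊢; linarith)
      exact (hasDerivAt_const t (0:ℝ)).congr_of_eventuallyEq this
    · exact absurd he hm1
    · -- -1 < t < 0 : chi s = 1 + s locally, deriv 1
      have hd : dchi t = 1 := by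
        unfold dchi sfun
        rw [if_pos ⟨by linarith, by linarith⟩, if_neg (by push_neg; intro h'; linarith)]
        ring
      rw [hd]
      have : chi =ᶠ[nhds t] fun s => 1 + s := by
        filter_upwards [Ioo_mem_nhds hgt hneg] with s hs
        unfold chi
        rw [abs_of_neg hs.2, max_eq_right (by linarith [hs.1])]
        ring
      exact ((hasDerivAt_id t).const_add 1).congr_of_eventuallyEq this
  · exact absurd hz h0
  · rcases lt_trichotomy t 1 with hlt | he | hgt
    · -- 0 < t < 1 : chi s = 1 - s locally, deriv -1
      have hd : dchi t = -1 := by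
        unfold dchi sfun
        rw [if_neg (by push_neg; intro h'; linarith), if_pos ⟨hpos, hlt⟩]
        ring
      rw [hd]
      have : chi =ᶠ[nhds t] fun s => 1 - s := by
        filter_upwards [Ioo_mem_nhds hpos hlt] with s hs
        unfold chi
        rw [abs_of_pos hs.1, max_eq_right (by linarith [hs.2])]
      simpa using ((hasDerivAt_id t).const_sub 1).congr_of_eventuallyEq this
    · exact absurd he h1
    · have hd : dchi t = 0 := by
        unfold dchi sfun
        rw [if_neg (by push_neg; intro h'; linarith), if_neg (by push_neg; intro h'; linarith)]
        ring
      rw [hd]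
      have : chi =ᶠ[nhds t] fun _ => (0 : ℝ) := by
        filter_upwards [Ioi_mem_nhds hgt] with s hs
        exact chi_eq_zero (le_abs_self s |>.trans' (by simpa using hs.le))
      exact (hasDerivAt_const t (0:ℝ)).congr_of_eventuallyEq this

lemma abs_prod_sub_prod_le {ι : Type*} [DecidableEq ι] (s : Finset ι) (f g : ι → ℝ)
    (hf : ∀ i, |f i| ≤ 1) (hg : ∀ i, |g i| ≤ 1) :
    |∏ i ∈ s, f i - ∏ i ∈ s, g i| ≤ ∑ i ∈ s, |f i - g i| := by
  induction s using Finset.induction with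
  | empty => simp
  | @insert a s ha ih =>
    rw [Finset.prod_insert ha, Finset.prod_insert ha, Finset.sum_insert ha]
    have key : f a * ∏ i ∈ s, f i - g a * ∏ i ∈ s, g i
        = f a * (∏ i ∈ s, f i - ∏ i ∈ s, g i) + (f a - g a) * ∏ i ∈ s, g i := by ring
    rw [key]
    have h1 : |f a * (∏ i ∈ s, f i - ∏ i ∈ s, g i)| ≤ ∑ i ∈ s, |f i - g i| := by
      rw [abs_mul]
      calc |f a| * |∏ i ∈ s, f i - ∏ i ∈ s, g i| ≤ 1 * |∏ i ∈ s, f i - ∏ i ∈ s, g i| :=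
            mul_le_mul_of_nonneg_right (hf a) (abs_nonneg _)
        _ = |∏ i ∈ s, f i - ∏ i ∈ s, g i| := one_mul _
        _ ≤ _ := ih
    have h2 : |(f a - g a) * ∏ i ∈ s, g i| ≤ |f a - g a| := by
      rw [abs_mul]
      have : |∏ i ∈ s, g i| ≤ 1 := by
        rw [Finset.abs_prod]
        exact Finset.prod_le_one (fun i _ => abs_nonneg _) (fun i _ => hg i)
      calc |f a - g a| * |∏ i ∈ s, g i| ≤ |f a - g a| * 1 :=
            mul_le_mul_of_nonneg_left this (abs_nonneg _)
        _ = _ := mul_one _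
    calc |f a * (∏ i ∈ s, f i - ∏ i ∈ s, g i) + (f a - g a) * ∏ i ∈ s, g i|
        ≤ |f a * (∏ i ∈ s, f i - ∏ i ∈ s, g i)| + |(f a - g a) * ∏ i ∈ s, g i| := abs_add_le _ _
      _ ≤ ∑ i ∈ s, |f i - g i| + |f a - g a| := add_le_add h1 h2
      _ = |f a - g a| + ∑ i ∈ s, |f i - g i| := by ring

lemma integral_chi : ∫ t : ℝ, chi t = 1 := by
  have hind : chi = Set.indicator (Set.Icc (-1 : ℝ) 1) (fun t => 1 - |t|) := by
    funext t
    by_cases ht : t ∈ Set.Icc (-1 : ℝ) 1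
    · rw [Set.indicator_of_mem ht]
      unfold chi
      rw [Set.mem_Icc] at ht
      rw [max_eq_right (by rw [sub_nonneg]; exact abs_le.mpr ht)]
    · rw [Set.indicator_of_notMem ht]
      apply chi_eq_zero
      rw [Set.mem_Icc] at ht
      push_neg at ht
      rcases le_or_gt (-1 : ℝ) t with h | h
      · linarith [ht h, le_abs_self t]
      · linarith [neg_abs_le t]
  rw [hind, MeasureTheory.integral_indicator measurableSet_Icc]
  rw [MeasureTheory.integral_Icc_eq_integral_Ioc, ← intervalIntegral.integral_of_le (by norm_num : (-1:ℝ) ≤ 1)]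
  have hsplit : ∫ t in (-1 : ℝ)..1, (1 - |t|) =
      (∫ t in (-1 : ℝ)..0, (1 - |t|)) + ∫ t in (0 : ℝ)..1, (1 - |t|) := by
    rw [intervalIntegral.integral_add_adjacent_intervals] <;>
      exact (continuous_const.sub continuous_abs).intervalIntegrable _ _
  rw [hsplit]
  have h1 : ∫ t in (-1 : ℝ)..0, (1 - |t|) = ∫ t in (-1 : ℝ)..0, (1 + t) := by
    apply intervalIntegral.integral_congr
    intro t ht
    rw [Set.uIcc_of_le (by norm_num : (-1:ℝ) ≤ 0), Set.mem_Icc] at ht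
    show 1 - |t| = 1 + t
    rw [abs_of_nonpos ht.2]; ring
  have h2 : ∫ t in (0 : ℝ)..1, (1 - |t|) = ∫ t in (0 : ℝ)..1, (1 - t) := by
    apply intervalIntegral.integral_congr
    intro t ht
    rw [Set.uIcc_of_le (by norm_num : (0:ℝ) ≤ 1), Set.mem_Icc] at ht
    show 1 - |t| = 1 - t
    rw [abs_of_nonneg ht.1]
  rw [h1, h2]
  have i1 : ∫ t in (-1 : ℝ)..0, (1 + t) = 1/2 := by
    open intervalIntegral in
    rw [integral_add intervalIntegrable_const intervalIntegrable_id]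
    simp [integral_id]
    norm_num
  have i2 : ∫ t in (0 : ℝ)..1, (1 - t) = 1/2 := by
    open intervalIntegral in
    rw [integral_sub intervalIntegrable_const intervalIntegrable_id]
    simp [integral_id]
    norm_num
  rw [i1, i2]; norm_num

lemma chi_compactSupport (h : ℝ) (hh : 0 < h) (k : ℤ) :
    HasCompactSupport (fun t : ℝ => chi (t / h - (k : ℝ))) := by
  apply HasCompactSupport.intro (isCompact_Icc (a := (k : ℝ) * h - h) (b := (k : ℝ) * h + h))
  intro t ht
  apply chi_eq_zero
  rw [Set.mem_Icc] at ht
  push_neg at ht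
  rcases le_or_gt ((k : ℝ) * h - h) t with h1 | h1
  · have h2 := ht h1
    rw [le_abs]; left
    rw [le_sub_iff_add_le, le_div_iff₀ hh]
    nlinarith
  · rw [le_abs]; right
    rw [le_neg, sub_le_iff_le_add, div_le_iff₀ hh]
    nlinarith

lemma continuous_chi_scaled (h : ℝ) (k : ℤ) :
    Continuous (fun t : ℝ => chi (t / h - (k : ℝ))) :=
  continuous_chi.comp ((continuous_id.div_const h).sub continuous_const)

lemma integrable_chi_scaled (h : ℝ) (hh : 0 < h) (k : ℤ) :
    Integrable (fun t : ℝ => chi (t / h - (k : ℝ))) :=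
  (continuous_chi_scaled h k).integrable_of_hasCompactSupport (chi_compactSupport h hh k)

lemma integral_chi_scaled (h : ℝ) (hh : 0 < h) (k : ℤ) :
    ∫ t : ℝ, chi (t / h - (k : ℝ)) = h := by
  rw [show (fun t : ℝ => chi (t / h - (k : ℝ))) = (fun t : ℝ => (fun s => chi (s - (k : ℝ))) (t / h)) from rfl,
    MeasureTheory.Measure.integral_comp_div (fun s => chi (s - (k : ℝ))) h]
  simp_rw [sub_eq_add_neg]
  rw [MeasureTheory.integral_add_right_eq_self chi (-(k:ℝ)), integral_chi,
    abs_of_pos hh, smul_eq_mul, mul_one]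

lemma sfun_indicator (h : ℝ) (hh : 0 < h) (k : ℤ) :
    (fun t : ℝ => sfun (t / h - (k : ℝ)))
      = Set.indicator (Set.Ioo ((k : ℝ) * h) ((k : ℝ) * h + h)) (fun _ => (1 : ℝ)) := by
  funext t
  unfold sfun
  by_cases ht : t ∈ Set.Ioo ((k : ℝ) * h) ((k : ℝ) * h + h)
  · rw [Set.indicator_of_mem ht, if_pos]
    rw [Set.mem_Ioo] at ht
    constructor
    · rw [sub_pos, lt_div_iff₀ hh]; linarith [ht.1]
    · rw [sub_lt_iff_lt_add, div_lt_iff₀ hh]; nlinarith [ht.2]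
  · rw [Set.indicator_of_notMem ht, if_neg]
    rw [Set.mem_Ioo] at ht
    push_neg at ht
    rintro ⟨h1, h2⟩
    rw [sub_pos, lt_div_iff₀ hh] at h1
    rw [sub_lt_iff_lt_add, div_lt_iff₀ hh] at h2
    rcases le_or_gt t ((k:ℝ) * h) with h3 | h3
    · linarith
    · nlinarith [ht h3]

lemma integrable_sfun_scaled (h : ℝ) (hh : 0 < h) (k : ℤ) :
    Integrable (fun t : ℝ => sfun (t / h - (k : ℝ))) := by
  rw [sfun_indicator h hh k]
  rw [integrable_indicator_iff measurableSet_Ioo]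
  apply (integrableOn_const_iff (C := (1 : ℝ))).mpr
  right
  rw [Real.volume_Ioo]
  exact ENNReal.ofReal_lt_top

lemma integral_sfun_scaled (h : ℝ) (hh : 0 < h) (k : ℤ) :
    ∫ t : ℝ, sfun (t / h - (k : ℝ)) = h := by
  rw [sfun_indicator h hh k]
  rw [MeasureTheory.integral_indicator_const (1 : ℝ) measurableSet_Ioo]
  rw [measureReal_def, Real.volume_Ioo, smul_eq_mul, mul_one]
  rw [show (k : ℝ) * h + h - (k : ℝ) * h = h by ring, ENNReal.toReal_ofReal hh.le]

section dim

variable {d : ℕ}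

lemma not_int_of_ne_mul {h : ℝ} (hh : 0 < h) {t : ℝ} (ht : ∀ n : ℤ, t ≠ (n : ℝ) * h)
    (k : ℤ) (n : ℤ) : t / h - (k : ℝ) ≠ (n : ℝ) := by
  intro he
  apply ht (n + k)
  push_cast
  field_simp at he
  linarith

lemma hasFDerivAt_phik {h : ℝ} (hh : 0 < h) (k : Fin d → ℤ) (x : Fin d → ℝ)
    (hx : ∀ j : Fin d, ∀ n : ℤ, x j ≠ (n : ℝ) * h) :
    HasFDerivAt (fun y : Fin d → ℝ => ∏ j : Fin d, chi (y j / h - (k j : ℝ)))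
      (∑ j : Fin d, (∏ l ∈ Finset.univ.erase j, chi (x l / h - (k l : ℝ))) •
        (dchi (x j / h - (k j : ℝ)) •
          (h⁻¹ • ContinuousLinearMap.proj (R := ℝ) (φ := fun _ : Fin d => ℝ) j))) x := by
  apply HasFDerivAt.finset_prod
  intro j _
  have hchi : HasDerivAt chi (dchi (x j / h - (k j : ℝ))) (x j / h - (k j : ℝ)) :=
    hasDerivAt_chi (fun n => not_int_of_ne_mul hh (hx j) (k j) n)
  have hinner : HasFDerivAt (fun y : Fin d → ℝ => y j / h - (k j : ℝ))
      (h⁻¹ • ContinuousLinearMap.proj (R := ℝ) (φ := fun _ : Fin d => ℝ) j) x := by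
    simp_rw [div_eq_mul_inv]
    exact ((ContinuousLinearMap.proj (R := ℝ) (φ := fun _ : Fin d => ℝ) j).hasFDerivAt.mul_const
      h⁻¹).sub_const _
  exact HasDerivAt.comp_hasFDerivAt (h₂ := chi) (f := fun y : Fin d → ℝ => y j / h - (k j : ℝ)) x hchi hinner

lemma fderiv_Phi_apply {h : ℝ} (hh : 0 < h) (w : (Fin d → ℤ) → ℝ) (s : Finset (Fin d → ℤ))
    (i : Fin d) (x : Fin d → ℝ) (hx : ∀ j : Fin d, ∀ n : ℤ, x j ≠ (n : ℝ) * h) :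
    fderiv ℝ (fun y : Fin d → ℝ => ∑ k ∈ s, w k * ∏ j : Fin d, chi (y j / h - (k j : ℝ))) x
        (Pi.single i 1)
      = ∑ k ∈ s, w k * (dchi (x i / h - (k i : ℝ)) * h⁻¹ *
          ∏ l ∈ Finset.univ.erase i, chi (x l / h - (k l : ℝ))) := by
  have hF : HasFDerivAt
      (fun y : Fin d → ℝ => ∑ k ∈ s, w k * ∏ j : Fin d, chi (y j / h - (k j : ℝ)))
      (∑ k ∈ s, w k • (∑ j : Fin d, (∏ l ∈ Finset.univ.erase j, chi (x l / h - (k l : ℝ))) •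
        (dchi (x j / h - (k j : ℝ)) •
          (h⁻¹ • ContinuousLinearMap.proj (R := ℝ) (φ := fun _ : Fin d => ℝ) j)))) x :=
    HasFDerivAt.fun_sum (fun k _ => (hasFDerivAt_phik hh k x hx).const_mul (w k))
  rw [hF.fderiv, ContinuousLinearMap.sum_apply]
  apply Finset.sum_congr rfl
  intro k _
  rw [ContinuousLinearMap.smul_apply, ContinuousLinearMap.sum_apply, smul_eq_mul]
  congr 1
  rw [Finset.sum_eq_single_of_mem i (Finset.mem_univ i)]
  · simp only [ContinuousLinearMap.smul_apply, ContinuousLinearMap.proj_apply,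
      Pi.single_apply, if_pos rfl, smul_eq_mul, if_true, div_eq_mul_inv]
    ring
  · intro j _ hj
    simp only [ContinuousLinearMap.smul_apply, ContinuousLinearMap.proj_apply,
      Pi.single_apply, smul_eq_mul]
    rw [if_neg (by exact fun hji => hj hji)]
    ring

lemma sum_by_parts {h : ℝ} (hh : 0 < h) (w : (Fin d → ℤ) → ℝ)
    (hw : (Function.support w).Finite) (i : Fin d) (x : Fin d → ℝ) :
    ∑ k ∈ hw.toFinset, w k * (dchi (x i / h - (k i : ℝ)) * h⁻¹ *
          ∏ l ∈ Finset.univ.erase i, chi (x l / h - (k l : ℝ)))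
      = ∑ k ∈ hw.toFinset ∪ hw.toFinset.image (· - Pi.single i 1),
          ((w (k + Pi.single i 1) - w k) / h) *
            (sfun (x i / h - (k i : ℝ)) *
              ∏ l ∈ Finset.univ.erase i, chi (x l / h - (k l : ℝ))) := by
  classical
  set s := hw.toFinset with hs
  set S := s ∪ s.image (· - Pi.single i 1) with hS
  set P : (Fin d → ℤ) → ℝ :=
    fun k => ∏ l ∈ Finset.univ.erase i, chi (x l / h - (k l : ℝ)) with hP
  set G : (Fin d → ℤ) → ℝ := fun m => w m * sfun (x i / h - (m i : ℝ) + 1) * P m with hG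
  set H : (Fin d → ℤ) → ℝ := fun m => w m * sfun (x i / h - (m i : ℝ)) * P m with hH
  have hw0 : ∀ m, m ∉ s → w m = 0 := by
    intro m hm
    by_contra h0
    exact hm (by rw [hs, Set.Finite.mem_toFinset]; exact h0)
  have hPshift : ∀ k : Fin d → ℤ, P (k + Pi.single i 1) = P k := by
    intro k
    apply Finset.prod_congr rfl
    intro l hl
    have hli : l ≠ i := (Finset.mem_erase.mp hl).1
    simp [Pi.single_apply, hli]
  have key1 : ∑ k ∈ S, w (k + Pi.single i 1) * sfun (x i / h - (k i : ℝ)) * P k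
      = ∑ m ∈ s, G m := by
    have e1 : ∀ k : Fin d → ℤ,
        w (k + Pi.single i 1) * sfun (x i / h - (k i : ℝ)) * P k = G (k + Pi.single i 1) := by
      intro k
      simp only [hG]
      rw [hPshift k]
      have hii : ((k + Pi.single i (1:ℤ)) : Fin d → ℤ) i = k i + 1 := by simp
      rw [hii]
      push_cast
      ring_nf
    have himg : ∑ m ∈ S.image (· + Pi.single i 1), G m = ∑ k ∈ S, G (k + Pi.single i 1) :=
      Finset.sum_image (fun a _ b _ hab => add_left_injective _ hab)
    rw [Finset.sum_congr rfl (fun k _ => e1 k), ← himg]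
    apply (Finset.sum_subset ?_ ?_).symm
    · intro m hm
      apply Finset.mem_image.mpr
      refine ⟨m - Pi.single i 1, ?_, by simp⟩
      rw [hS]
      exact Finset.mem_union_right _ (Finset.mem_image_of_mem _ hm)
    · intro m _ hm
      simp only [hG]
      rw [hw0 m hm]
      ring
  have key2 : ∑ k ∈ S, H k = ∑ k ∈ s, H k := by
    apply (Finset.sum_subset Finset.subset_union_left ?_).symm
    intro m _ hm
    simp only [hH]
    rw [hw0 m hm]
    ring
  have lhs_eq : ∑ k ∈ s, w k * (dchi (x i / h - (k i : ℝ)) * h⁻¹ * P k)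
      = (∑ m ∈ s, G m) * h⁻¹ - (∑ m ∈ s, H m) * h⁻¹ := by
    rw [Finset.sum_mul, Finset.sum_mul, ← Finset.sum_sub_distrib]
    apply Finset.sum_congr rfl
    intro k _
    simp only [hG, hH]
    unfold dchi
    ring
  have rhs_eq : ∑ k ∈ S, ((w (k + Pi.single i 1) - w k) / h) *
        (sfun (x i / h - (k i : ℝ)) * P k)
      = (∑ k ∈ S, w (k + Pi.single i 1) * sfun (x i / h - (k i : ℝ)) * P k) * h⁻¹
        - (∑ k ∈ S, H k) * h⁻¹ := by
    rw [Finset.sum_mul, Finset.sum_mul, ← Finset.sum_sub_distrib]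
    apply Finset.sum_congr rfl
    intro k _
    simp only [hH]
    field_simp
  rw [lhs_eq, rhs_eq, key1, key2]

lemma lipschitz_Phi {h : ℝ} (hh : 0 < h) (w : (Fin d → ℤ) → ℝ) (s : Finset (Fin d → ℤ)) :
    ∃ C : NNReal, LipschitzWith C
      (fun x : Fin d → ℝ => ∑ k ∈ s, w k * ∏ j : Fin d, chi (x j / h - (k j : ℝ))) := by
  classical
  set L : ℝ := (∑ k ∈ s, |w k|) * ((d : ℝ) * h⁻¹) with hL
  refine ⟨Real.toNNReal L, LipschitzWith.of_dist_le_mul ?_⟩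
  intro x y
  rw [Real.dist_eq]
  have key : |(∑ k ∈ s, w k * ∏ j : Fin d, chi (x j / h - (k j : ℝ))) -
      ∑ k ∈ s, w k * ∏ j : Fin d, chi (y j / h - (k j : ℝ))| ≤ L * dist x y := by
    rw [← Finset.sum_sub_distrib]
    calc |∑ k ∈ s, (w k * ∏ j : Fin d, chi (x j / h - (k j : ℝ)) -
            w k * ∏ j : Fin d, chi (y j / h - (k j : ℝ)))|
        ≤ ∑ k ∈ s, |w k * ∏ j : Fin d, chi (x j / h - (k j : ℝ)) -
            w k * ∏ j : Fin d, chi (y j / h - (k j : ℝ))| := Finset.abs_sum_le_sum_abs _ _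
      _ ≤ ∑ k ∈ s, |w k| * ((d : ℝ) * h⁻¹ * dist x y) := by
          apply Finset.sum_le_sum
          intro k _
          rw [← mul_sub, abs_mul]
          apply mul_le_mul_of_nonneg_left _ (abs_nonneg _)
          calc |(∏ j : Fin d, chi (x j / h - (k j : ℝ))) -
                ∏ j : Fin d, chi (y j / h - (k j : ℝ))|
              ≤ ∑ j : Fin d, |chi (x j / h - (k j : ℝ)) - chi (y j / h - (k j : ℝ))| := by
                apply abs_prod_sub_prod_le
                · intro j
                  rw [abs_of_nonneg (chi_nonneg _)]
                  exact chi_le_one _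
                · intro j
                  rw [abs_of_nonneg (chi_nonneg _)]
                  exact chi_le_one _
            _ ≤ ∑ j : Fin d, h⁻¹ * dist x y := by
                apply Finset.sum_le_sum
                intro j _
                calc |chi (x j / h - (k j : ℝ)) - chi (y j / h - (k j : ℝ))|
                    ≤ |(x j / h - (k j : ℝ)) - (y j / h - (k j : ℝ))| := abs_chi_sub_chi_le _ _
                  _ = |x j - y j| * h⁻¹ := by
                      rw [show (x j / h - (k j : ℝ)) - (y j / h - (k j : ℝ))
                          = (x j - y j) * h⁻¹ by rw [div_eq_mul_inv, div_eq_mul_inv]; ring, abs_mul,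
                        abs_of_nonneg (inv_nonneg.mpr hh.le)]
                  _ ≤ dist x y * h⁻¹ := by
                      apply mul_le_mul_of_nonneg_right _ (inv_nonneg.mpr hh.le)
                      rw [← Real.dist_eq]
                      exact dist_le_pi_dist x y j
                  _ = h⁻¹ * dist x y := mul_comm _ _
            _ = (d : ℝ) * h⁻¹ * dist x y := by
                rw [Finset.sum_const, Finset.card_univ, Fintype.card_fin, nsmul_eq_mul]
                ring
      _ = L * dist x y := by rw [hL, ← Finset.sum_mul]; ring
  calc _ ≤ L * dist x y := key
    _ ≤ (Real.toNNReal L : ℝ) * dist x y := by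
        apply mul_le_mul_of_nonneg_right _ dist_nonneg
        rw [Real.coe_toNNReal']
        exact le_max_left _ _

lemma sfun_eq_zero_of_abs {t : ℝ} (ht : 1 ≤ |t|) : sfun t = 0 := by
  unfold sfun
  rw [if_neg]
  rintro ⟨h1, h2⟩
  have : |t| < 1 := abs_lt.mpr ⟨by linarith, h2⟩
  linarith

lemma abs_ge_one_of_not_near (t : ℝ) (n : ℤ) (hn1 : n ≠ ⌊t⌋) (hn2 : n ≠ ⌊t⌋ + 1) :
    1 ≤ |t - (n : ℝ)| := by
  rcases lt_or_gt_of_ne hn1 with hlt | hgt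
  · -- n ≤ ⌊t⌋ - 1, so t - n ≥ 1
    have hn : n ≤ ⌊t⌋ - 1 := by omega
    have : ((n : ℝ)) ≤ (⌊t⌋ : ℝ) - 1 := by exact_mod_cast hn
    have hfl := Int.floor_le t
    rw [le_abs]; left; linarith
  · have hn : ⌊t⌋ + 2 ≤ n := by omega
    have : ((⌊t⌋ : ℝ)) + 2 ≤ (n : ℝ) := by exact_mod_cast hn
    have hfl := Int.lt_floor_add_one t
    rw [le_abs]; right; linarith

lemma sum_psi_le_one {h : ℝ} (hh : 0 < h) (i : Fin d) (S : Finset (Fin d → ℤ))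
    (x : Fin d → ℝ) :
    ∑ k ∈ S, sfun (x i / h - (k i : ℝ)) *
        ∏ l ∈ Finset.univ.erase i, chi (x l / h - (k l : ℝ)) ≤ 1 := by
  classical
  set f : Fin d → ℤ → ℝ := fun j n =>
    if j = i then sfun (x j / h - (n : ℝ)) else chi (x j / h - (n : ℝ)) with hf
  have hf0 : ∀ j n, 0 ≤ f j n := by
    intro j n
    rw [hf]
    dsimp only
    split
    · exact sfun_nonneg _
    · exact chi_nonneg _
  have hrepr : ∀ k : Fin d → ℤ, sfun (x i / h - (k i : ℝ)) *
      ∏ l ∈ Finset.univ.erase i, chi (x l / h - (k l : ℝ)) = ∏ j : Fin d, f j (k j) := by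
    intro k
    rw [← Finset.mul_prod_erase Finset.univ _ (Finset.mem_univ i)]
    congr 1
    · rw [hf]; simp
    · apply Finset.prod_congr rfl
      intro l hl
      rw [hf]
      simp [(Finset.mem_erase.mp hl).1]
  simp_rw [hrepr]
  set T : Fin d → Finset ℤ := fun j => {⌊x j / h⌋, ⌊x j / h⌋ + 1} with hT
  have hzero : ∀ k : Fin d → ℤ, k ∉ Fintype.piFinset T → ∏ j : Fin d, f j (k j) = 0 := by
    intro k hk
    rw [Fintype.mem_piFinset] at hk
    push_neg at hk
    obtain ⟨j, hj⟩ := hk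
    rw [hT] at hj
    simp only [Finset.mem_insert, Finset.mem_singleton] at hj
    push_neg at hj
    have habs : 1 ≤ |x j / h - (k j : ℝ)| := abs_ge_one_of_not_near _ _ hj.1 hj.2
    apply Finset.prod_eq_zero (Finset.mem_univ j)
    rw [hf]
    dsimp only
    split
    · exact sfun_eq_zero_of_abs habs
    · exact chi_eq_zero habs
  have step1 : ∑ k ∈ S, ∏ j : Fin d, f j (k j)
      = ∑ k ∈ S ∩ Fintype.piFinset T, ∏ j : Fin d, f j (k j) := by
    apply (Finset.sum_subset Finset.inter_subset_left ?_).symm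
    intro k hk hk'
    apply hzero
    intro hmem
    exact hk' (Finset.mem_inter.mpr ⟨hk, hmem⟩)
  have step2 : ∑ k ∈ S ∩ Fintype.piFinset T, ∏ j : Fin d, f j (k j)
      ≤ ∑ k ∈ Fintype.piFinset T, ∏ j : Fin d, f j (k j) := by
    apply Finset.sum_le_sum_of_subset_of_nonneg Finset.inter_subset_right
    intro k _ _
    exact Finset.prod_nonneg (fun j _ => hf0 j (k j))
  have step3 : ∑ k ∈ Fintype.piFinset T, ∏ j : Fin d, f j (k j)
      = ∏ j : Fin d, ∑ n ∈ T j, f j n := (Finset.prod_univ_sum T f).symm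
  have step4 : ∏ j : Fin d, ∑ n ∈ T j, f j n ≤ 1 := by
    apply Finset.prod_le_one
    · intro j _
      exact Finset.sum_nonneg (fun n _ => hf0 j n)
    · intro j _
      rw [hT]
      dsimp only
      rw [Finset.sum_pair (by omega : ⌊x j / h⌋ ≠ ⌊x j / h⌋ + 1)]
      set t := x j / h with ht
      have hfl := Int.floor_le t
      have hfl2 := Int.lt_floor_add_one t
      rw [hf]
      dsimp only
      split
      · -- j = i : sfun case
        have h2 : sfun (t - ((⌊t⌋ : ℝ) + 1)) = 0 := by
          unfold sfun
          rw [if_neg]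
          push_cast
          rintro ⟨h1, _⟩
          linarith
        push_cast [h2]
        show sfun (t - (⌊t⌋ : ℝ)) + sfun (t - ((⌊t⌋ : ℝ) + 1)) ≤ 1
        rw [h2]; linarith [sfun_le_one (t - (⌊t⌋ : ℝ))]
      · -- chi case : sum equals 1
        have e1 : chi (t - (⌊t⌋ : ℝ)) = 1 - (t - (⌊t⌋ : ℝ)) := by
          unfold chi
          rw [abs_of_nonneg (by linarith), max_eq_right (by linarith)]
        have e2 : chi (t - ((⌊t⌋ : ℝ) + 1)) = t - (⌊t⌋ : ℝ) := by
          unfold chi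
          rw [abs_of_nonpos (by linarith), max_eq_right (by linarith)]
          ring
        push_cast [e1]
        push_cast at e2
        rw [e2]
        linarith
  calc _ = _ := step1
    _ ≤ _ := step2
    _ = _ := step3
    _ ≤ 1 := step4

noncomputable def Ffun (h : ℝ) (i : Fin d) (k : Fin d → ℤ) (j : Fin d) (t : ℝ) : ℝ :=
  if j = i then sfun (t / h - (k j : ℝ)) else chi (t / h - (k j : ℝ))

lemma psi_repr {h : ℝ} (i : Fin d) (k : Fin d → ℤ) :
    (fun x : Fin d → ℝ => sfun (x i / h - (k i : ℝ)) *
        ∏ l ∈ Finset.univ.erase i, chi (x l / h - (k l : ℝ)))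
      = fun x : Fin d → ℝ => ∏ j : Fin d, Ffun h i k j (x j) := by
  classical
  unfold Ffun
  funext x
  rw [← Finset.mul_prod_erase Finset.univ _ (Finset.mem_univ i)]
  congr 1
  · simp
  · apply Finset.prod_congr rfl
    intro l hl
    simp [(Finset.mem_erase.mp hl).1]

lemma integrable_psi {h : ℝ} (hh : 0 < h) (i : Fin d) (k : Fin d → ℤ) :
    Integrable (fun x : Fin d → ℝ => sfun (x i / h - (k i : ℝ)) *
        ∏ l ∈ Finset.univ.erase i, chi (x l / h - (k l : ℝ))) := by
  rw [psi_repr]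
  apply Integrable.fintype_prod (f := Ffun h i k)
  intro j
  unfold Ffun
  split
  · exact integrable_sfun_scaled h hh (k j)
  · exact integrable_chi_scaled h hh (k j)

lemma integral_psi {h : ℝ} (hh : 0 < h) (i : Fin d) (k : Fin d → ℤ) :
    ∫ x : Fin d → ℝ, sfun (x i / h - (k i : ℝ)) *
        ∏ l ∈ Finset.univ.erase i, chi (x l / h - (k l : ℝ)) = h ^ d := by
  rw [psi_repr, MeasureTheory.integral_fintype_prod_volume_eq_prod (f := Ffun h i k)]
  have : ∀ j : Fin d, (∫ t : ℝ, Ffun h i k j t) = h := by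
    intro j
    unfold Ffun
    by_cases hj : j = i
    · simp only [if_pos hj]
      exact integral_sfun_scaled h hh (k j)
    · simp only [if_neg hj]
      exact integral_chi_scaled h hh (k j)
  calc ∏ j : Fin d, (∫ t : ℝ, Ffun h i k j t)
      = ∏ _j : Fin d, h := Finset.prod_congr rfl (fun j _ => this j)
    _ = h ^ d := by rw [Finset.prod_const, Finset.card_univ, Fintype.card_fin]

lemma psi_nonneg {h : ℝ} (i : Fin d) (k : Fin d → ℤ) (x : Fin d → ℝ) :
    0 ≤ sfun (x i / h - (k i : ℝ)) *
        ∏ l ∈ Finset.univ.erase i, chi (x l / h - (k l : ℝ)) :=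
  mul_nonneg (sfun_nonneg _) (Finset.prod_nonneg (fun l _ => chi_nonneg _))

lemma sq_sum_le_of_partition {ι : Type*} (S : Finset ι) (b ψ : ι → ℝ)
    (hψ0 : ∀ k, 0 ≤ ψ k) (hψ1 : ∑ k ∈ S, ψ k ≤ 1) :
    (∑ k ∈ S, b k * ψ k) ^ 2 ≤ ∑ k ∈ S, (b k) ^ 2 * ψ k := by
  have key := Finset.sum_mul_sq_le_sq_mul_sq S (fun k => Real.sqrt (ψ k))
    (fun k => b k * Real.sqrt (ψ k))
  have e1 : ∀ k, Real.sqrt (ψ k) * (b k * Real.sqrt (ψ k)) = b k * ψ k := by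
    intro k
    rw [show b k * ψ k = b k * (Real.sqrt (ψ k) * Real.sqrt (ψ k)) by
      rw [Real.mul_self_sqrt (hψ0 k)]]
    ring
  have e2 : ∀ k, Real.sqrt (ψ k) ^ 2 = ψ k := fun k => Real.sq_sqrt (hψ0 k)
  have e3 : ∀ k, (b k * Real.sqrt (ψ k)) ^ 2 = (b k) ^ 2 * ψ k := by
    intro k
    rw [mul_pow, e2]
  rw [Finset.sum_congr rfl (fun k _ => e1 k), Finset.sum_congr rfl (fun k _ => e2 k),
    Finset.sum_congr rfl (fun k _ => e3 k)] at key
  calc (∑ k ∈ S, b k * ψ k) ^ 2 ≤ (∑ k ∈ S, ψ k) * ∑ k ∈ S, (b k) ^ 2 * ψ k := key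
    _ ≤ 1 * ∑ k ∈ S, (b k) ^ 2 * ψ k := by
        apply mul_le_mul_of_nonneg_right hψ1
        exact Finset.sum_nonneg (fun k _ => mul_nonneg (sq_nonneg _) (hψ0 k))
    _ = _ := one_mul _

lemma le_sqrt_mul_sqrt_of_amgm (X A B : ℝ) (hA : 0 ≤ A) (hB : 0 ≤ B)
    (hX : ∀ c : ℝ, 0 < c → X ≤ (c * A + B / c) / 2) :
    X ≤ Real.sqrt A * Real.sqrt B := by
  have hs : 0 ≤ Real.sqrt A * Real.sqrt B :=
    mul_nonneg (Real.sqrt_nonneg _) (Real.sqrt_nonneg _)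
  rcases eq_or_lt_of_le hA with hA0 | hA0
  · -- A = 0 : X ≤ B / (2c) for all c, so X ≤ 0
    have hX0 : X ≤ 0 := by
      by_contra hc
      push_neg at hc
      have hc2 : 0 < B / (2 * X) + 1 := by positivity
      have := hX (B / (2 * X) + 1) hc2
      rw [← hA0] at this
      have hBc : B / (B / (2 * X) + 1) < 2 * X := by
        rw [div_lt_iff₀ hc2]
        have he : 2 * X * (B / (2 * X) + 1) = B + 2 * X := by
          field_simp
        rw [he]
        linarith
      linarith
    linarith
  rcases eq_or_lt_of_le hB with hB0 | hB0
  · have hX0 : X ≤ 0 := by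
      by_contra hc
      push_neg at hc
      have hc2 : 0 < X / A := by positivity
      have := hX (X / A) hc2
      rw [← hB0] at this
      rw [div_mul_cancel₀ _ (ne_of_gt hA0)] at this
      simp at this
      linarith
    linarith
  · set c := Real.sqrt B / Real.sqrt A with hc
    have hsA : 0 < Real.sqrt A := Real.sqrt_pos.mpr hA0
    have hsB : 0 < Real.sqrt B := Real.sqrt_pos.mpr hB0
    have hcpos : 0 < c := div_pos hsB hsA
    have h1 : c * A = Real.sqrt A * Real.sqrt B := by
      rw [hc]
      field_simp
      rw [Real.sq_sqrt hA]
    have h2 : B / c = Real.sqrt A * Real.sqrt B := by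
      rw [hc, div_div_eq_mul_div, div_eq_iff (ne_of_gt hsB)]
      rw [show Real.sqrt A * Real.sqrt B * Real.sqrt B = Real.sqrt A * (Real.sqrt B * Real.sqrt B) by ring,
        Real.mul_self_sqrt hB]
      ring
    have := hX c hcpos
    rw [h1, h2] at this
    linarith

lemma abs_mul_le_amgm (p q c : ℝ) (hc : 0 < c) : |p * q| ≤ (c * p ^ 2 + q ^ 2 / c) / 2 := by
  have key2 : 2 * c * |p * q| ≤ c ^ 2 * p ^ 2 + q ^ 2 := by
    rcases abs_cases (p * q) with ⟨he, _⟩ | ⟨he, _⟩ <;> rw [he] <;>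
      nlinarith [sq_nonneg (c * p - q), sq_nonneg (c * p + q)]
  have he : (c * p ^ 2 + q ^ 2 / c) / 2 = (c ^ 2 * p ^ 2 + q ^ 2) / (2 * c) := by
    field_simp
  rw [he, le_div_iff₀ (by positivity)]
  linarith

lemma core_bound {h : ℝ} (hh : 0 < h)
    (u v : (Fin d → ℤ) → ℝ) (hu : (Function.support u).Finite)
    (hv : (Function.support v).Finite) (i : Fin d) :
    |∫ x : Fin d → ℝ,
        (∑ k ∈ hv.toFinset ∪ hv.toFinset.image (· - Pi.single i 1),
          ((v (k + Pi.single i 1) - v k) / h) * (sfun (x i / h - (k i : ℝ)) *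
            ∏ l ∈ Finset.univ.erase i, chi (x l / h - (k l : ℝ)))) *
        (∑ k ∈ hu.toFinset ∪ hu.toFinset.image (· - Pi.single i 1),
          ((u (k + Pi.single i 1) - u k) / h) * (sfun (x i / h - (k i : ℝ)) *
            ∏ l ∈ Finset.univ.erase i, chi (x l / h - (k l : ℝ))))|
      ≤ h ^ d * Real.sqrt (∑ᶠ k : Fin d → ℤ, ((v (k + Pi.single i 1) - v k) / h) ^ 2)
          * Real.sqrt (∑ᶠ k : Fin d → ℤ, ((u (k + Pi.single i 1) - u k) / h) ^ 2) := by
  classical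
  set ψ : (Fin d → ℤ) → (Fin d → ℝ) → ℝ := fun k x => sfun (x i / h - (k i : ℝ)) *
    ∏ l ∈ Finset.univ.erase i, chi (x l / h - (k l : ℝ)) with hψ
  set a : (Fin d → ℤ) → ℝ := fun k => (v (k + Pi.single i 1) - v k) / h with ha
  set b : (Fin d → ℤ) → ℝ := fun k => (u (k + Pi.single i 1) - u k) / h with hb
  set Sv := hv.toFinset ∪ hv.toFinset.image (· - Pi.single i 1) with hSv
  set Su := hu.toFinset ∪ hu.toFinset.image (· - Pi.single i 1) with hSu
  set A := ∑ k ∈ Sv, a k ^ 2 with hA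
  set B := ∑ k ∈ Su, b k ^ 2 with hB
  have hsupp : ∀ (w : (Fin d → ℤ) → ℝ) (hw : (Function.support w).Finite),
      Function.support (fun k => ((w (k + Pi.single i 1) - w k) / h) ^ 2) ⊆
        ↑(hw.toFinset ∪ hw.toFinset.image (· - Pi.single i 1)) := by
    intro w hw k hk
    simp only [Function.mem_support] at hk
    have : w (k + Pi.single i 1) ≠ 0 ∨ w k ≠ 0 := by
      by_contra hcon
      push_neg at hcon
      apply hk
      rw [hcon.1, hcon.2]
      simp
    rcases this with h1 | h1
    · apply Finset.mem_coe.mpr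
      apply Finset.mem_union_right
      apply Finset.mem_image.mpr
      exact ⟨k + Pi.single i 1, hw.mem_toFinset.mpr h1, by simp⟩
    · exact Finset.mem_coe.mpr (Finset.mem_union_left _ (hw.mem_toFinset.mpr h1))
  have hAfin : ∑ᶠ k : Fin d → ℤ, a k ^ 2 = A :=
    finsum_eq_sum_of_support_subset _ (hsupp v hv)
  have hBfin : ∑ᶠ k : Fin d → ℤ, b k ^ 2 = B :=
    finsum_eq_sum_of_support_subset _ (hsupp u hu)
  have hA0 : 0 ≤ A := Finset.sum_nonneg (fun k _ => sq_nonneg _)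
  have hB0 : 0 ≤ B := Finset.sum_nonneg (fun k _ => sq_nonneg _)
  have hψ0 : ∀ k x, 0 ≤ ψ k x := fun k x => psi_nonneg i k x
  have hψint : ∀ k, Integrable (ψ k) := fun k => integrable_psi hh i k
  have hψvol : ∀ k, ∫ x, ψ k x = h ^ d := fun k => integral_psi hh i k
  set gv : (Fin d → ℝ) → ℝ := fun x => ∑ k ∈ Sv, a k * ψ k x with hgv
  set gu : (Fin d → ℝ) → ℝ := fun x => ∑ k ∈ Su, b k * ψ k x with hgu
  set Fv : (Fin d → ℝ) → ℝ := fun x => ∑ k ∈ Sv, a k ^ 2 * ψ k x with hFv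
  set Fu : (Fin d → ℝ) → ℝ := fun x => ∑ k ∈ Su, b k ^ 2 * ψ k x with hFu
  have hFvInt : Integrable Fv :=
    integrable_finset_sum _ (fun k _ => (hψint k).const_mul (a k ^ 2))
  have hFuInt : Integrable Fu :=
    integrable_finset_sum _ (fun k _ => (hψint k).const_mul (b k ^ 2))
  have hIntFv : ∫ x, Fv x = A * h ^ d := by
    rw [hFv, MeasureTheory.integral_finset_sum _ (fun k _ => (hψint k).const_mul (a k ^ 2))]
    rw [hA, Finset.sum_mul]
    apply Finset.sum_congr rfl
    intro k _
    rw [MeasureTheory.integral_const_mul, hψvol k]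
  have hIntFu : ∫ x, Fu x = B * h ^ d := by
    rw [hFu, MeasureTheory.integral_finset_sum _ (fun k _ => (hψint k).const_mul (b k ^ 2))]
    rw [hB, Finset.sum_mul]
    apply Finset.sum_congr rfl
    intro k _
    rw [MeasureTheory.integral_const_mul, hψvol k]
  have hgv2 : ∀ x, (gv x) ^ 2 ≤ Fv x := by
    intro x
    exact sq_sum_le_of_partition Sv a (fun k => ψ k x) (fun k => hψ0 k x)
      (sum_psi_le_one hh i Sv x)
  have hgu2 : ∀ x, (gu x) ^ 2 ≤ Fu x := by
    intro x
    exact sq_sum_le_of_partition Su b (fun k => ψ k x) (fun k => hψ0 k x)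
      (sum_psi_le_one hh i Su x)
  have hFv0 : ∀ x, 0 ≤ Fv x :=
    fun x => Finset.sum_nonneg (fun k _ => mul_nonneg (sq_nonneg _) (hψ0 k x))
  have hFu0 : ∀ x, 0 ≤ Fu x :=
    fun x => Finset.sum_nonneg (fun k _ => mul_nonneg (sq_nonneg _) (hψ0 k x))
  have key : ∀ c : ℝ, 0 < c →
      |∫ x, gv x * gu x| ≤ (c * (A * h ^ d) + (B * h ^ d) / c) / 2 := by
    intro c hc
    calc |∫ x, gv x * gu x| ≤ ∫ x, |gv x * gu x| := by
          have h0 := MeasureTheory.norm_integral_le_integral_norm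
            (μ := volume) (fun x => gv x * gu x)
          simp only [Real.norm_eq_abs] at h0
          exact h0
      _ ≤ ∫ x, (c * Fv x + Fu x / c) / 2 := by
          apply MeasureTheory.integral_mono_of_nonneg
            (Filter.Eventually.of_forall (fun x => abs_nonneg _))
            (((hFvInt.const_mul c).add (hFuInt.div_const c)).div_const 2)
          apply Filter.Eventually.of_forall
          intro x
          calc |gv x * gu x| ≤ (c * (gv x) ^ 2 + (gu x) ^ 2 / c) / 2 :=
                abs_mul_le_amgm _ _ _ hc
            _ ≤ (c * Fv x + Fu x / c) / 2 := by
                gcongr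
                · exact hgv2 x
                · exact hgu2 x
      _ = (c * (A * h ^ d) + (B * h ^ d) / c) / 2 := by
          rw [MeasureTheory.integral_div, MeasureTheory.integral_add
            (hFvInt.const_mul c) (hFuInt.div_const c),
            MeasureTheory.integral_const_mul, MeasureTheory.integral_div, hIntFv, hIntFu]
  have main : |∫ x, gv x * gu x| ≤ Real.sqrt (A * h ^ d) * Real.sqrt (B * h ^ d) := by
    apply le_sqrt_mul_sqrt_of_amgm _ _ _ (by positivity) (by positivity)
    intro c hc
    exact key c hc
  have hconv : Real.sqrt (A * h ^ d) * Real.sqrt (B * h ^ d)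
      = h ^ d * Real.sqrt A * Real.sqrt B := by
    rw [Real.sqrt_mul hA0, Real.sqrt_mul hB0]
    rw [show Real.sqrt A * Real.sqrt (h ^ d) * (Real.sqrt B * Real.sqrt (h ^ d))
        = (Real.sqrt (h ^ d) * Real.sqrt (h ^ d)) * (Real.sqrt A * Real.sqrt B) by ring,
      Real.mul_self_sqrt (by positivity)]
    ring
  rw [hAfin, hBfin]
  calc |∫ x, gv x * gu x| ≤ Real.sqrt (A * h ^ d) * Real.sqrt (B * h ^ d) := main
    _ = h ^ d * Real.sqrt A * Real.sqrt B := hconv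

end dim


/-- The hat interpolants `Φu, Φv` of finitely supported grid
functions are Lipschitz, hence almost everywhere differentiable, and
`|∑ᵢ ∫ ∂ᵢ(Φv) ∂ᵢ(Φu)| ≤ h^d q(v)^{1/2} q(u)^{1/2}`, where
`q(u) = ∑ᵢ ∑_k ((u_{k+eᵢ} - u_k)/h)²` is the discrete Dirichlet energy. -/
theorem stmt13 (d : ℕ) (hd : 1 ≤ d) (h : ℝ) (hh : 0 < h)
    (u v : (Fin d → ℤ) → ℝ)
    (hu : (Function.support u).Finite)
    (hv : (Function.support v).Finite)
    (Phiu Phiv : (Fin d → ℝ) → ℝ)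
    (hPhiu : Phiu = fun x : Fin d → ℝ =>
        ∑ᶠ k : Fin d → ℤ, u k * ∏ i : Fin d, chi (x i / h - (k i : ℝ)))
    (hPhiv : Phiv = fun x : Fin d → ℝ =>
        ∑ᶠ k : Fin d → ℤ, v k * ∏ i : Fin d, chi (x i / h - (k i : ℝ))) :
    (∃ C : NNReal, LipschitzWith C Phiu) ∧
    (∃ C : NNReal, LipschitzWith C Phiv) ∧
    (∀ᵐ x : Fin d → ℝ, DifferentiableAt ℝ Phiu x ∧ DifferentiableAt ℝ Phiv x) ∧
    |∑ i : Fin d, ∫ x : Fin d → ℝ,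
        fderiv ℝ Phiv x (Pi.single i 1) * fderiv ℝ Phiu x (Pi.single i 1)|
      ≤ h ^ d *
        Real.sqrt (∑ i : Fin d, ∑ᶠ k : Fin d → ℤ,
          ((v (k + Pi.single i 1) - v k) / h) ^ 2) *
        Real.sqrt (∑ i : Fin d, ∑ᶠ k : Fin d → ℤ,
          ((u (k + Pi.single i 1) - u k) / h) ^ 2) := by
  classical
  have hrw : ∀ (w : (Fin d → ℤ) → ℝ) (hw : (Function.support w).Finite),
      (fun x : Fin d → ℝ => ∑ᶠ k : Fin d → ℤ, w k * ∏ i : Fin d, chi (x i / h - (k i : ℝ)))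
        = fun x : Fin d → ℝ =>
            ∑ k ∈ hw.toFinset, w k * ∏ j : Fin d, chi (x j / h - (k j : ℝ)) := by
    intro w hw
    funext x
    apply finsum_eq_sum_of_support_subset
    intro k hk
    simp only [Function.mem_support] at hk
    have hwk : w k ≠ 0 := by
      intro h0
      apply hk
      rw [h0, zero_mul]
    simpa using hwk
  have hPhiu' : Phiu = fun x : Fin d → ℝ =>
      ∑ k ∈ hu.toFinset, u k * ∏ j : Fin d, chi (x j / h - (k j : ℝ)) := by
    rw [hPhiu, hrw u hu]
  have hPhiv' : Phiv = fun x : Fin d → ℝ =>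
      ∑ k ∈ hv.toFinset, v k * ∏ j : Fin d, chi (x j / h - (k j : ℝ)) := by
    rw [hPhiv, hrw v hv]
  obtain ⟨Cu, hLu⟩ : ∃ C : NNReal, LipschitzWith C Phiu := by
    rw [hPhiu']
    exact lipschitz_Phi hh u hu.toFinset
  obtain ⟨Cv, hLv⟩ : ∃ C : NNReal, LipschitzWith C Phiv := by
    rw [hPhiv']
    exact lipschitz_Phi hh v hv.toFinset
  refine ⟨⟨Cu, hLu⟩, ⟨Cv, hLv⟩, ?_, ?_⟩
  · exact (hLu.ae_differentiableAt (μ := volume)).and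
      (hLv.ae_differentiableAt (μ := volume))
  · -- the main estimate
    have hae : ∀ᵐ x : Fin d → ℝ, ∀ j : Fin d, ∀ n : ℤ, x j ≠ (n : ℝ) * h := by
      rw [MeasureTheory.ae_all_iff]
      intro j
      rw [MeasureTheory.ae_all_iff]
      intro n
      have hne := MeasureTheory.Measure.ae_eval_ne (fun _ : Fin d => (volume : Measure ℝ)) j
        ((n : ℝ) * h)
      rw [← MeasureTheory.volume_pi] at hne
      exact hne
    set Av : Fin d → ℝ := fun i =>
      ∑ᶠ k : Fin d → ℤ, ((v (k + Pi.single i 1) - v k) / h) ^ 2 with hAv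
    set Bu : Fin d → ℝ := fun i =>
      ∑ᶠ k : Fin d → ℤ, ((u (k + Pi.single i 1) - u k) / h) ^ 2 with hBu
    have hAv0 : ∀ i, 0 ≤ Av i := fun i => finsum_nonneg (fun k => sq_nonneg _)
    have hBu0 : ∀ i, 0 ≤ Bu i := fun i => finsum_nonneg (fun k => sq_nonneg _)
    have hIbound : ∀ i : Fin d,
        |∫ x : Fin d → ℝ, fderiv ℝ Phiv x (Pi.single i 1) * fderiv ℝ Phiu x (Pi.single i 1)|
          ≤ h ^ d * Real.sqrt (Av i) * Real.sqrt (Bu i) := by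
      intro i
      have hIeq : (∫ x : Fin d → ℝ,
          fderiv ℝ Phiv x (Pi.single i 1) * fderiv ℝ Phiu x (Pi.single i 1))
          = ∫ x : Fin d → ℝ,
            (∑ k ∈ hv.toFinset ∪ hv.toFinset.image (· - Pi.single i 1),
              ((v (k + Pi.single i 1) - v k) / h) * (sfun (x i / h - (k i : ℝ)) *
                ∏ l ∈ Finset.univ.erase i, chi (x l / h - (k l : ℝ)))) *
            (∑ k ∈ hu.toFinset ∪ hu.toFinset.image (· - Pi.single i 1),
              ((u (k + Pi.single i 1) - u k) / h) * (sfun (x i / h - (k i : ℝ)) *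
                ∏ l ∈ Finset.univ.erase i, chi (x l / h - (k l : ℝ)))) := by
        apply MeasureTheory.integral_congr_ae
        filter_upwards [hae] with x hx
        rw [hPhiu', hPhiv', fderiv_Phi_apply hh v hv.toFinset i x hx,
          fderiv_Phi_apply hh u hu.toFinset i x hx,
          sum_by_parts hh v hv i x, sum_by_parts hh u hu i x]
      rw [hIeq]
      exact core_bound hh u v hu hv i
    calc |∑ i : Fin d, ∫ x : Fin d → ℝ,
          fderiv ℝ Phiv x (Pi.single i 1) * fderiv ℝ Phiu x (Pi.single i 1)|
        ≤ ∑ i : Fin d, |∫ x : Fin d → ℝ,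
            fderiv ℝ Phiv x (Pi.single i 1) * fderiv ℝ Phiu x (Pi.single i 1)| :=
          Finset.abs_sum_le_sum_abs _ _
      _ ≤ ∑ i : Fin d, h ^ d * Real.sqrt (Av i) * Real.sqrt (Bu i) :=
          Finset.sum_le_sum (fun i _ => hIbound i)
      _ = h ^ d * ∑ i : Fin d, Real.sqrt (Av i) * Real.sqrt (Bu i) := by
          rw [Finset.mul_sum]
          apply Finset.sum_congr rfl
          intro i _
          ring
      _ ≤ h ^ d * (Real.sqrt (∑ i : Fin d, Av i) * Real.sqrt (∑ i : Fin d, Bu i)) := by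
          apply mul_le_mul_of_nonneg_left _ (by positivity)
          have h2 := Finset.sum_mul_sq_le_sq_mul_sq Finset.univ
            (fun i => Real.sqrt (Av i)) (fun i => Real.sqrt (Bu i))
          rw [Finset.sum_congr rfl (fun i (_ : i ∈ Finset.univ) => Real.sq_sqrt (hAv0 i)),
            Finset.sum_congr rfl (fun i (_ : i ∈ Finset.univ) => Real.sq_sqrt (hBu0 i))] at h2
          have hnn : 0 ≤ ∑ i : Fin d, Real.sqrt (Av i) * Real.sqrt (Bu i) :=
            Finset.sum_nonneg (fun i _ =>
              mul_nonneg (Real.sqrt_nonneg _) (Real.sqrt_nonneg _))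
          calc ∑ i : Fin d, Real.sqrt (Av i) * Real.sqrt (Bu i)
              = Real.sqrt ((∑ i : Fin d, Real.sqrt (Av i) * Real.sqrt (Bu i)) ^ 2) :=
                (Real.sqrt_sq hnn).symm
            _ ≤ Real.sqrt ((∑ i : Fin d, Av i) * ∑ i : Fin d, Bu i) :=
                Real.sqrt_le_sqrt h2
            _ = Real.sqrt (∑ i : Fin d, Av i) * Real.sqrt (∑ i : Fin d, Bu i) :=
                Real.sqrt_mul (Finset.sum_nonneg (fun i _ => hAv0 i)) _
      _ = h ^ d * Real.sqrt (∑ i : Fin d, Av i) * Real.sqrt (∑ i : Fin d, Bu i) := by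
          ring
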